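/- Let g ∈ H, set f* := L^{1/2} g, let y ∈ ℂ^m, and let f_D := S* (S S*)⁻¹ y. Then for all μ > 0 and λ > 0: ‖L^{1/2} (f_D − f*)‖ ≤ (2 + μ σ_min^{−1}) Q_μ² P_μ + λ Q_λ² ‖g‖, where P_μ := ‖(L + μI)^{−1/2} (T f* − S* y)‖. -/

import Mathlib

open ContinuousLinearMap
open scoped InnerProductSpace

/-- The fractional power `A ^ s` of a (positive) operator, defined via the continuous
functional calculus applied to the real function `x ↦ x ^ s`. -/
noncomputable def opow {H : Type*} [NormedAddCommGroup H] [InnerProductSpace ℂ H]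
    [CompleteSpace H] (A : H →L[ℂ] H) (s : ℝ) : H →L[ℂ] H :=
  cfc (fun x : ℝ => x ^ s) A

set_option maxHeartbeats 1000000

section aux
variable {H : Type*} [NormedAddCommGroup H] [InnerProductSpace ℂ H] [CompleteSpace H]

lemma contOn_rpow (s : ℝ) {t : Set ℝ} (ht : ∀ x ∈ t, x ≠ 0) :
    ContinuousOn (fun x : ℝ => x ^ s) t := fun x hx =>
  (Real.continuousAt_rpow_const x s (Or.inl (ht x hx))).continuousWithinAt

lemma contOn_shift_rpow (s μ : ℝ) (hμ : 0 < μ) {t : Set ℝ} (ht : ∀ x ∈ t, 0 ≤ x) :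
    ContinuousOn (fun x : ℝ => (x + μ) ^ s) t := by
  intro x hx
  have hx0 : x + μ ≠ 0 := by have := ht x hx; positivity
  have : ContinuousAt ((fun y : ℝ => y ^ s) ∘ (fun x : ℝ => x + μ)) x :=
    ContinuousAt.comp (g := fun y : ℝ => y ^ s) (f := fun x : ℝ => x + μ) (x := x)
      (Real.continuousAt_rpow_const (x + μ) s (Or.inl hx0))
      (continuousAt_id.add continuousAt_const)
  exact this.continuousWithinAt

lemma spec_nonneg {A : H →L[ℂ] H} (hA : A.IsPositive) :
    ∀ x ∈ spectrum ℝ A, 0 ≤ x :=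
  fun _ hx => spectrum_nonneg_of_nonneg ((nonneg_iff_isPositive A).mpr hA) hx

lemma smul_one_eq_algebraMap (μ : ℝ) :
    (μ : ℂ) • (1 : H →L[ℂ] H) = algebraMap ℝ (H →L[ℂ] H) μ := by
  rw [Algebra.algebraMap_eq_smul_one]
  norm_num

variable {A : H →L[ℂ] H} (hA : A.IsPositive) {μ : ℝ} (hμ : 0 < μ)

include hA hμ

lemma half_mul_half :
    cfc (fun x : ℝ => (x + μ) ^ ((1:ℝ)/2)) A * cfc (fun x : ℝ => (x + μ) ^ ((1:ℝ)/2)) A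
      = A + (μ : ℂ) • 1 := by
  have hsa : IsSelfAdjoint A := hA.isSelfAdjoint
  rw [← cfc_mul _ _ A (contOn_shift_rpow _ _ hμ (spec_nonneg hA))
    (contOn_shift_rpow _ _ hμ (spec_nonneg hA))]
  have h2 : cfc (fun x : ℝ => ((x + μ) ^ ((1:ℝ)/2)) * ((x + μ) ^ ((1:ℝ)/2))) A
      = cfc (fun x : ℝ => x + μ) A := by
    apply cfc_congr
    intro x hx
    have h0 : (0:ℝ) < x + μ := by have := spec_nonneg hA x hx; positivity
    show (x + μ) ^ ((1:ℝ)/2) * (x + μ) ^ ((1:ℝ)/2) = x + μ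
    rw [← Real.rpow_add h0]
    norm_num
  rw [h2]
  have h3 := cfc_add_const (R := ℝ) μ (fun x : ℝ => x) A
  rw [cfc_id' ℝ A] at h3
  rw [h3, Algebra.algebraMap_eq_smul_one]
  norm_num

lemma neg_half_mul_half :
    cfc (fun x : ℝ => (x + μ) ^ (-((1:ℝ)/2))) A * cfc (fun x : ℝ => (x + μ) ^ ((1:ℝ)/2)) A
      = 1 := by
  have hsa : IsSelfAdjoint A := hA.isSelfAdjoint
  rw [← cfc_mul _ _ A (contOn_shift_rpow _ _ hμ (spec_nonneg hA))
    (contOn_shift_rpow _ _ hμ (spec_nonneg hA))]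
  have h2 : cfc (fun x : ℝ => ((x + μ) ^ (-((1:ℝ)/2))) * ((x + μ) ^ ((1:ℝ)/2))) A
      = cfc (1 : ℝ → ℝ) A := by
    apply cfc_congr
    intro x hx
    have h0 : (0:ℝ) < x + μ := by have := spec_nonneg hA x hx; positivity
    show (x + μ) ^ (-((1:ℝ)/2)) * (x + μ) ^ ((1:ℝ)/2) = 1
    rw [← Real.rpow_add h0]
    norm_num
  rw [h2, cfc_one ℝ A]

lemma half_mul_neg_half :
    cfc (fun x : ℝ => (x + μ) ^ ((1:ℝ)/2)) A * cfc (fun x : ℝ => (x + μ) ^ (-((1:ℝ)/2))) A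
      = 1 := by
  have hsa : IsSelfAdjoint A := hA.isSelfAdjoint
  rw [← cfc_mul _ _ A (contOn_shift_rpow _ _ hμ (spec_nonneg hA))
    (contOn_shift_rpow _ _ hμ (spec_nonneg hA))]
  have h2 : cfc (fun x : ℝ => ((x + μ) ^ ((1:ℝ)/2)) * ((x + μ) ^ (-((1:ℝ)/2)))) A
      = cfc (1 : ℝ → ℝ) A := by
    apply cfc_congr
    intro x hx
    have h0 : (0:ℝ) < x + μ := by have := spec_nonneg hA x hx; positivity
    show (x + μ) ^ ((1:ℝ)/2) * (x + μ) ^ (-((1:ℝ)/2)) = 1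
    rw [← Real.rpow_add h0]
    norm_num
  rw [h2, cfc_one ℝ A]

lemma contraction_norm_le :
    ‖cfc (fun x : ℝ => x ^ ((1:ℝ)/2) * (x + μ) ^ (-((1:ℝ)/2))) A‖ ≤ 1 := by
  apply norm_cfc_le zero_le_one
  intro x hx
  have hx0 : (0:ℝ) ≤ x := spec_nonneg hA x hx
  have h0 : (0:ℝ) < x + μ := by positivity
  have h1 : x ^ ((1:ℝ)/2) ≤ (x + μ) ^ ((1:ℝ)/2) :=
    Real.rpow_le_rpow hx0 (by linarith) (by norm_num)
  have h2 : (0:ℝ) ≤ (x + μ) ^ (-((1:ℝ)/2)) := Real.rpow_nonneg h0.le _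
  rw [Real.norm_eq_abs, abs_of_nonneg (mul_nonneg (Real.rpow_nonneg hx0 _) h2)]
  calc x ^ ((1:ℝ)/2) * (x + μ) ^ (-((1:ℝ)/2))
      ≤ (x + μ) ^ ((1:ℝ)/2) * (x + μ) ^ (-((1:ℝ)/2)) := by
        exact mul_le_mul_of_nonneg_right h1 h2
    _ = 1 := by rw [← Real.rpow_add h0]; norm_num

lemma factor_sqrt :
    cfc (fun x : ℝ => x ^ ((1:ℝ)/2) * (x + μ) ^ (-((1:ℝ)/2))) A *
      cfc (fun x : ℝ => (x + μ) ^ ((1:ℝ)/2)) A = opow A ((1:ℝ)/2) := by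
  have hsa : IsSelfAdjoint A := hA.isSelfAdjoint
  have hc1 : ContinuousOn (fun x : ℝ => x ^ ((1:ℝ)/2) * (x + μ) ^ (-((1:ℝ)/2)))
      (spectrum ℝ A) := by
    apply ContinuousOn.mul
    · exact fun x hx => (Real.continuousAt_rpow_const x _ (Or.inr (by norm_num))).continuousWithinAt
    · exact contOn_shift_rpow _ _ hμ (spec_nonneg hA)
  rw [← cfc_mul _ _ A hc1 (contOn_shift_rpow _ _ hμ (spec_nonneg hA))]
  apply cfc_congr
  intro x hx
  have hx0 : (0:ℝ) ≤ x := spec_nonneg hA x hx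
  have h0 : (0:ℝ) < x + μ := by positivity
  show x ^ ((1:ℝ)/2) * (x + μ) ^ (-((1:ℝ)/2)) * (x + μ) ^ ((1:ℝ)/2) = _
  rw [mul_assoc, ← Real.rpow_add h0]
  norm_num


lemma opow_add_smul_eq' (s : ℝ) :
    opow (A + (μ : ℂ) • 1) s = cfc (fun x : ℝ => (x + μ) ^ s) A := by
  have hsa : IsSelfAdjoint A := hA.isSelfAdjoint
  have h1 : cfc (fun x : ℝ => x + μ) A = A + (μ : ℂ) • 1 := by
    rw [smul_one_eq_algebraMap]
    have := cfc_add_const (R := ℝ) μ (fun x : ℝ => x) A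
    rwa [cfc_id' ℝ A] at this
  have hg : ContinuousOn (fun x : ℝ => x ^ s) ((fun x : ℝ => x + μ) '' spectrum ℝ A) := by
    apply contOn_rpow
    rintro x ⟨z, hz, rfl⟩
    have := spec_nonneg hA z hz
    positivity
  rw [opow, ← h1, ← cfc_comp' (fun x : ℝ => x ^ s) (fun x : ℝ => x + μ) A hg (by fun_prop)]

lemma normsq_half_shift (u : H) :
    ‖(opow (A + (μ : ℂ) • 1) (1 / 2)) u‖ ^ 2
      = RCLike.re ⟪u, A u⟫_ℂ + μ * ‖u‖ ^ 2 := by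
  set M := opow (A + (μ : ℂ) • 1) (1 / 2) with hM
  have heq : M = cfc (fun x : ℝ => (x + μ) ^ ((1:ℝ)/2)) A := by
    rw [hM, opow_add_smul_eq' hA hμ]
  have hsa : adjoint M = M := by
    rw [heq]; exact isSelfAdjoint_iff'.mp (cfc_predicate _ A)
  have hMM : M * M = A + (μ : ℂ) • 1 := by rw [heq]; exact half_mul_half hA hμ
  have h1 : ⟪u, (M * M) u⟫_ℂ = ⟪M u, M u⟫_ℂ := by
    rw [mul_apply_eq_comp, ← adjoint_inner_left M (M u) u, hsa]
  have h2 : (⟪u, (M * M) u⟫_ℂ) = ⟪u, A u⟫_ℂ + (μ : ℂ) * ⟪u, u⟫_ℂ := by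
    rw [hMM]
    simp only [add_apply, smul_apply, one_apply_eq_self, inner_add_right, inner_smul_right]
  rw [← inner_self_eq_norm_sq (𝕜 := ℂ), ← h1, h2, map_add]
  congr 1
  have h3 : RCLike.re ((μ:ℂ) * ⟪u, u⟫_ℂ) = μ * RCLike.re ⟪u, u⟫_ℂ := by
    simp [RCLike.mul_re]
  rw [h3, inner_self_eq_norm_sq]

lemma shift_half_norm_le {L : H →L[ℂ] H} (hL : L.IsPositive) (u : H) :
    ‖(opow (L + (μ : ℂ) • 1) (1 / 2)) u‖ ≤
      ‖opow (A + (μ : ℂ) • 1) (-(1 / 2)) ∘L opow (L + (μ : ℂ) • 1) (1 / 2)‖ *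
      ‖(opow (A + (μ : ℂ) • 1) (1 / 2)) u‖ := by
  set NT := opow (A + (μ : ℂ) • 1) (-(1 / 2)) with hNT
  set HL := opow (L + (μ : ℂ) • 1) (1 / 2) with hHL
  set HT := opow (A + (μ : ℂ) • 1) (1 / 2) with hHT
  have h1 : NT * HT = 1 := by
    rw [hNT, hHT, opow_add_smul_eq' hA hμ, opow_add_smul_eq' hA hμ]
    exact neg_half_mul_half hA hμ
  have hNTsa : adjoint NT = NT := by
    rw [hNT, opow_add_smul_eq' hA hμ]; exact isSelfAdjoint_iff'.mp (cfc_predicate _ A)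
  have hHLsa : adjoint HL = HL := by
    rw [hHL, opow_add_smul_eq' hL hμ]; exact isSelfAdjoint_iff'.mp (cfc_predicate _ L)
  have h2 : HL u = (HL * NT) (HT u) := by
    rw [mul_apply_eq_comp]
    congr 1
    rw [← mul_apply_eq_comp, h1, one_apply_eq_self]
  have h3 : ‖HL * NT‖ = ‖NT * HL‖ := by
    rw [show HL * NT = adjoint (NT * HL) by
      rw [show NT * HL = NT ∘L HL from rfl, adjoint_comp, hNTsa, hHLsa]; rfl]
    exact adjoint.norm_map _
  calc ‖HL u‖ = ‖(HL * NT) (HT u)‖ := by rw [h2]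
    _ ≤ ‖HL * NT‖ * ‖HT u‖ := le_opNorm _ _
    _ = ‖NT ∘L HL‖ * ‖HT u‖ := by rw [h3]; rfl

lemma L_half_norm_le {L : H →L[ℂ] H} (hL : L.IsPositive) (u : H) :
    ‖(opow L (1 / 2)) u‖ ≤
      ‖opow (A + (μ : ℂ) • 1) (-(1 / 2)) ∘L opow (L + (μ : ℂ) • 1) (1 / 2)‖ *
      ‖(opow (A + (μ : ℂ) • 1) (1 / 2)) u‖ := by
  set C := cfc (fun x : ℝ => x ^ ((1:ℝ)/2) * (x + μ) ^ (-((1:ℝ)/2))) L with hC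
  set HL := opow (L + (μ : ℂ) • 1) (1 / 2) with hHL
  have hfac : C * HL = opow L (1 / 2) := by
    rw [hC, hHL, opow_add_smul_eq' hL hμ]
    exact factor_sqrt hL hμ
  have h1 : ‖(opow L (1 / 2)) u‖ = ‖C (HL u)‖ := by rw [← hfac, mul_apply_eq_comp]
  have h2 : ‖C (HL u)‖ ≤ ‖C‖ * ‖HL u‖ := le_opNorm _ _
  have h3 : ‖C‖ ≤ 1 := contraction_norm_le hL hμ
  have h4 := shift_half_norm_le hA hμ hL u
  have h5 : ‖C‖ * ‖HL u‖ ≤ 1 * ‖HL u‖ :=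
    mul_le_mul_of_nonneg_right h3 (norm_nonneg _)
  rw [h1]
  calc ‖C (HL u)‖ ≤ 1 * ‖HL u‖ := h2.trans h5
    _ = ‖HL u‖ := one_mul _
    _ ≤ _ := h4


end aux

/-- Let `g ∈ H`, set `f* := L^{1/2} g`, let `y ∈ ℂ^m`, and let
`f_D := S* (S S*)⁻¹ y`.  Then for all `μ > 0` and `λ > 0`:
`‖L^{1/2} (f_D − f*)‖ ≤ (2 + μ σ_min^{−1}) Q_μ² P_μ + λ Q_λ² ‖g‖`, where
`P_μ := ‖(L + μI)^{−1/2} (T f* − S* y)‖` and `Q_λ := ‖(T + λI)^{−1/2} (L + λI)^{1/2}‖`. -/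
theorem noisy_interpolation_error_bound_rho_norm
    {H : Type*} [NormedAddCommGroup H] [InnerProductSpace ℂ H] [CompleteSpace H]
    {m : ℕ} (hm : 0 < m)
    (S : H →L[ℂ] EuclideanSpace ℂ (Fin m))
    (hinv : IsUnit (S ∘L ContinuousLinearMap.adjoint S))
    (L : H →L[ℂ] H) (hL : L.IsPositive)
    (g : H) (y : EuclideanSpace ℂ (Fin m)) (μ lam : ℝ) (hμ : 0 < μ) (hlam : 0 < lam) :
    letI T : H →L[ℂ] H := ContinuousLinearMap.adjoint S ∘L S
    letI fstar : H := (opow L (1 / 2)) g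
    letI fD : H :=
      (ContinuousLinearMap.adjoint S)
        ((Ring.inverse (S ∘L ContinuousLinearMap.adjoint S)) y)
    letI σmin : ℝ := ‖Ring.inverse (S ∘L ContinuousLinearMap.adjoint S)‖⁻¹
    letI Qμ : ℝ := ‖opow (T + (μ : ℂ) • (1 : H →L[ℂ] H)) (-(1 / 2)) ∘L
        opow (L + (μ : ℂ) • (1 : H →L[ℂ] H)) (1 / 2)‖
    letI Qlam : ℝ := ‖opow (T + (lam : ℂ) • (1 : H →L[ℂ] H)) (-(1 / 2)) ∘L
        opow (L + (lam : ℂ) • (1 : H →L[ℂ] H)) (1 / 2)‖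
    letI Pmu : ℝ := ‖(opow (L + (μ : ℂ) • (1 : H →L[ℂ] H)) (-(1 / 2)))
        (T fstar - (ContinuousLinearMap.adjoint S) y)‖
    ‖(opow L (1 / 2)) (fD - fstar)‖ ≤
      (2 + μ * σmin⁻¹) * Qμ ^ (2 : ℕ) * Pmu + lam * Qlam ^ (2 : ℕ) * ‖g‖ := by
  set S' := ContinuousLinearMap.adjoint S with hS'
  set K := S ∘L S' with hKdef
  set Ki := Ring.inverse K with hKidef
  set T := S' ∘L S with hTdef
  set fstar := (opow L (1 / 2)) g with hfstar
  set fD := S' (Ki y) with hfD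
  set Qmu : ℝ := ‖opow (T + (μ : ℂ) • (1 : H →L[ℂ] H)) (-(1 / 2)) ∘L
      opow (L + (μ : ℂ) • (1 : H →L[ℂ] H)) (1 / 2)‖ with hQmu
  set Qlam : ℝ := ‖opow (T + (lam : ℂ) • (1 : H →L[ℂ] H)) (-(1 / 2)) ∘L
      opow (L + (lam : ℂ) • (1 : H →L[ℂ] H)) (1 / 2)‖ with hQlam
  set Pmu : ℝ := ‖(opow (L + (μ : ℂ) • (1 : H →L[ℂ] H)) (-(1 / 2)))
      (T fstar - S' y)‖ with hPmu
  -- basic positivity facts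
  have hT : T.IsPositive := by
    constructor
    · rw [← isSelfAdjoint_iff_isSymmetric, isSelfAdjoint_iff', hTdef, adjoint_comp, hS', adjoint_adjoint]
    · intro x
      have h1 : T.reApplyInnerSelf x = RCLike.re ⟪S x, S x⟫_ℂ := by
        show RCLike.re ⟪(S' ∘L S) x, x⟫_ℂ = _
        rw [comp_apply, hS', adjoint_inner_left]
      rw [h1]
      exact inner_self_nonneg
  have hKKi : K * Ki = 1 := Ring.mul_inverse_cancel _ hinv
  have hKKiv : ∀ v, K (Ki v) = v := fun v => by rw [← mul_apply_eq_comp, hKKi, one_apply_eq_self]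
  have hKsa : star K = K := by
    rw [star_eq_adjoint, hKdef, adjoint_comp, hS', adjoint_adjoint]
  have hKisa : adjoint Ki = Ki := by
    rw [← star_eq_adjoint, hKidef, ← Ring.inverse_star, hKsa]
  -- the operator P and its pointwise properties
  set P : H →L[ℂ] H := (S' ∘L Ki) ∘L S with hP
  have hPv : ∀ v, P v = S' (Ki (S v)) := fun v => by rw [hP]; rfl
  have hSPv : ∀ v, S (P v) = S v := fun v => by
    rw [hPv]
    show (S ∘L S') (Ki (S v)) = S v
    rw [← hKdef, hKKiv]
  have hPPv : ∀ v, P (P v) = P v := fun v => by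
    rw [hPv (P v), hSPv, ← hPv]
  have hPsa : adjoint P = P := by
    rw [hP, adjoint_comp, adjoint_comp, hKisa, hS', adjoint_adjoint]
    ext v
    simp [comp_apply]
  -- main vectors
  set b := y - S fstar with hb
  set h := fD - P fstar with hh
  set w := fstar - P fstar with hw
  have hSfD : S fD = y := by
    rw [hfD]
    show (S ∘L S') (Ki y) = y
    rw [← hKdef, hKKiv]
  have hSh : S h = b := by rw [hh, map_sub, hSfD, hSPv, hb]
  have hTh : T h = S' b := by
    rw [hTdef]
    show S' (S h) = S' b
    rw [hSh]
  have hhval : h = S' (Ki b) := by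
    rw [hh, hfD, hPv, hb, map_sub, map_sub]
  -- selfadjointness of the opow operators
  have hHLμsa : adjoint (opow (L + (μ : ℂ) • (1 : H →L[ℂ] H)) (1 / 2))
      = opow (L + (μ : ℂ) • (1 : H →L[ℂ] H)) (1 / 2) := by
    rw [opow_add_smul_eq' hL hμ]
    exact isSelfAdjoint_iff'.mp (cfc_predicate _ L)
  have hopowLsa : adjoint (opow L (1 / 2)) = opow L (1 / 2) :=
    isSelfAdjoint_iff'.mp (cfc_predicate _ L)
  -- Pmu rewritten
  have hPmu' : Pmu = ‖(opow (L + (μ : ℂ) • (1 : H →L[ℂ] H)) (-(1 / 2))) (S' b)‖ := by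
    have h1 : T fstar - S' y = -(S' b) := by
      rw [hb, map_sub, hTdef, neg_sub]
      rfl
    rw [hPmu, h1, map_neg, norm_neg]
  -- central inner product estimate
  set t := ‖(opow (T + (μ : ℂ) • (1 : H →L[ℂ] H)) (1 / 2)) h‖ with ht
  have hcentral : RCLike.re ⟪h, S' b⟫_ℂ ≤ Qmu * t * Pmu := by
    set HL := opow (L + (μ : ℂ) • (1 : H →L[ℂ] H)) (1 / 2) with hHL
    set NL := opow (L + (μ : ℂ) • (1 : H →L[ℂ] H)) (-(1 / 2)) with hNL
    have h1 : HL * NL = 1 := by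
      rw [hHL, hNL, opow_add_smul_eq' hL hμ, opow_add_smul_eq' hL hμ]
      exact half_mul_neg_half hL hμ
    have h2 : S' b = HL (NL (S' b)) := by
      rw [← mul_apply_eq_comp, h1, one_apply_eq_self]
    have h3 : ⟪h, S' b⟫_ℂ = ⟪HL h, NL (S' b)⟫_ℂ := by
      conv_lhs => rw [h2]
      rw [← adjoint_inner_left HL (NL (S' b)) h, hHLμsa]
    rw [h3]
    calc RCLike.re ⟪HL h, NL (S' b)⟫_ℂ ≤ ‖HL h‖ * ‖NL (S' b)‖ := re_inner_le_norm _ _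
      _ ≤ (Qmu * t) * ‖NL (S' b)‖ := by
          apply mul_le_mul_of_nonneg_right _ (norm_nonneg _)
          exact shift_half_norm_le hT hμ hL h
      _ = Qmu * t * Pmu := by rw [hPmu']
  have hb2 : ‖b‖ ^ 2 ≤ Qmu * t * Pmu := by
    have hinner : (⟪b, b⟫_ℂ) = ⟪h, S' b⟫_ℂ := by
      nth_rewrite 1 [← hSh]
      rw [hS', adjoint_inner_right]
    rw [← inner_self_eq_norm_sq (𝕜 := ℂ), hinner]
    exact hcentral
  have hh2 : ‖h‖ ^ 2 ≤ ‖Ki‖ * ‖b‖ ^ 2 := by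
    have h1 : ⟪h, h⟫_ℂ = ⟪Ki b, b⟫_ℂ := by
      conv_lhs => rw [hhval]
      rw [hS', adjoint_inner_left, ← hS', ← hhval, hSh]
    calc ‖h‖ ^ 2 = RCLike.re ⟪h, h⟫_ℂ := (inner_self_eq_norm_sq (𝕜 := ℂ) _).symm
      _ = RCLike.re ⟪Ki b, b⟫_ℂ := by rw [h1]
      _ ≤ ‖Ki b‖ * ‖b‖ := re_inner_le_norm _ _
      _ ≤ (‖Ki‖ * ‖b‖) * ‖b‖ :=
          mul_le_mul_of_nonneg_right (le_opNorm _ _) (norm_nonneg _)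
      _ = ‖Ki‖ * ‖b‖ ^ 2 := by ring
  have htsq : t ^ 2 = RCLike.re ⟪h, S' b⟫_ℂ + μ * ‖h‖ ^ 2 := by
    rw [ht, normsq_half_shift hT hμ h, hTh]
  have htle : t ≤ (1 + μ * ‖Ki‖) * Qmu * Pmu := by
    have hQP : 0 ≤ Qmu * Pmu := mul_nonneg (norm_nonneg _) (norm_nonneg _)
    have hc : 0 ≤ (1 + μ * ‖Ki‖) * Qmu * Pmu := by
      apply mul_nonneg (mul_nonneg _ (norm_nonneg _)) (norm_nonneg _)
      have : 0 ≤ μ * ‖Ki‖ := mul_nonneg hμ.le (norm_nonneg _)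
      linarith
    rcases (norm_nonneg ((opow (T + (μ : ℂ) • (1 : H →L[ℂ] H)) (1 / 2)) h)).eq_or_lt with h0 | h0
    · rw [ht, ← h0]; exact hc
    · have htpos : 0 < t := by rw [ht]; exact h0
      have key : t * t ≤ ((1 + μ * ‖Ki‖) * Qmu * Pmu) * t := by
        have e1 : t * t = t ^ 2 := by ring
        have e2 : μ * ‖h‖ ^ 2 ≤ μ * (‖Ki‖ * (Qmu * t * Pmu)) := by
          apply mul_le_mul_of_nonneg_left _ hμ.le
          calc ‖h‖ ^ 2 ≤ ‖Ki‖ * ‖b‖ ^ 2 := hh2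
            _ ≤ ‖Ki‖ * (Qmu * t * Pmu) :=
                mul_le_mul_of_nonneg_left hb2 (norm_nonneg _)
        rw [e1, htsq]
        nlinarith [hcentral]
      exact le_of_mul_le_mul_right key htpos
  -- Part B bound
  have hpartB : ‖(opow L (1 / 2)) h‖ ≤ (1 + μ * ‖Ki‖) * Qmu ^ (2:ℕ) * Pmu := by
    calc ‖(opow L (1 / 2)) h‖ ≤ Qmu * t := L_half_norm_le hT hμ hL h
      _ ≤ Qmu * ((1 + μ * ‖Ki‖) * Qmu * Pmu) :=
          mul_le_mul_of_nonneg_left htle (norm_nonneg _)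
      _ = (1 + μ * ‖Ki‖) * Qmu ^ (2:ℕ) * Pmu := by ring
  -- Part A
  have hSw : S w = 0 := by rw [hw, map_sub, hSPv, sub_self]
  have hTw : T w = 0 := by
    rw [hTdef]
    show S' (S w) = 0
    rw [hSw, map_zero]
  have hA1 : ‖(opow (T + (lam : ℂ) • (1 : H →L[ℂ] H)) (1 / 2)) w‖
      = Real.sqrt lam * ‖w‖ := by
    have h2 := normsq_half_shift hT hlam w
    rw [hTw, inner_zero_right, map_zero, zero_add] at h2
    calc ‖(opow (T + (lam : ℂ) • (1 : H →L[ℂ] H)) (1 / 2)) w‖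
        = Real.sqrt (‖(opow (T + (lam : ℂ) • (1 : H →L[ℂ] H)) (1 / 2)) w‖ ^ 2) :=
          (Real.sqrt_sq (norm_nonneg _)).symm
      _ = Real.sqrt (lam * ‖w‖ ^ 2) := by rw [h2]
      _ = Real.sqrt lam * ‖w‖ := by
          rw [Real.sqrt_mul hlam.le, Real.sqrt_sq (norm_nonneg _)]
  have hA2 : ‖(opow L (1 / 2)) w‖ ≤ Qlam * (Real.sqrt lam * ‖w‖) := by
    calc ‖(opow L (1 / 2)) w‖
        ≤ Qlam * ‖(opow (T + (lam : ℂ) • (1 : H →L[ℂ] H)) (1 / 2)) w‖ :=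
          L_half_norm_le hT hlam hL w
      _ = Qlam * (Real.sqrt lam * ‖w‖) := by rw [hA1]
  have hwle : ‖w‖ ≤ Qlam * Real.sqrt lam * ‖g‖ := by
    have hPw : P w = 0 := by rw [hw, map_sub, hPPv, sub_self]
    have h1 : ⟪w, P fstar⟫_ℂ = 0 := by
      rw [← adjoint_inner_left P fstar w, hPsa, hPw, inner_zero_left]
    have h2 : ⟪w, w⟫_ℂ = ⟪(opow L (1 / 2)) w, g⟫_ℂ := by
      conv_lhs => rw [hw]
      rw [inner_sub_right, h1, sub_zero, hfstar,
        ← adjoint_inner_left (opow L (1 / 2)) g w, hopowLsa]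
    have h3 : ‖w‖ ^ 2 ≤ (Qlam * Real.sqrt lam * ‖g‖) * ‖w‖ := by
      calc ‖w‖ ^ 2 = RCLike.re ⟪w, w⟫_ℂ := (inner_self_eq_norm_sq (𝕜 := ℂ) _).symm
        _ = RCLike.re ⟪(opow L (1 / 2)) w, g⟫_ℂ := by rw [h2]
        _ ≤ ‖(opow L (1 / 2)) w‖ * ‖g‖ := re_inner_le_norm _ _
        _ ≤ (Qlam * (Real.sqrt lam * ‖w‖)) * ‖g‖ :=
            mul_le_mul_of_nonneg_right hA2 (norm_nonneg _)
        _ = (Qlam * Real.sqrt lam * ‖g‖) * ‖w‖ := by ring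
    have hc : 0 ≤ Qlam * Real.sqrt lam * ‖g‖ :=
      mul_nonneg (mul_nonneg (norm_nonneg _) (Real.sqrt_nonneg _)) (norm_nonneg _)
    rcases (norm_nonneg w).eq_or_lt with h0 | h0
    · rw [← h0]; exact hc
    · have : ‖w‖ * ‖w‖ ≤ (Qlam * Real.sqrt lam * ‖g‖) * ‖w‖ := by
        calc ‖w‖ * ‖w‖ = ‖w‖ ^ 2 := by ring
          _ ≤ _ := h3
      exact le_of_mul_le_mul_right this h0
  have hpartA : ‖(opow L (1 / 2)) w‖ ≤ lam * Qlam ^ (2:ℕ) * ‖g‖ := by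
    calc ‖(opow L (1 / 2)) w‖ ≤ Qlam * (Real.sqrt lam * ‖w‖) := hA2
      _ ≤ Qlam * (Real.sqrt lam * (Qlam * Real.sqrt lam * ‖g‖)) := by
          apply mul_le_mul_of_nonneg_left _ (norm_nonneg _)
          exact mul_le_mul_of_nonneg_left hwle (Real.sqrt_nonneg _)
      _ = (Real.sqrt lam * Real.sqrt lam) * Qlam ^ (2:ℕ) * ‖g‖ := by ring
      _ = lam * Qlam ^ (2:ℕ) * ‖g‖ := by rw [Real.mul_self_sqrt hlam.le]
  -- combine
  have hsplit : fD - fstar = h - w := by rw [hh, hw]; abel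
  have hσ : ‖Ring.inverse K‖⁻¹⁻¹ = ‖Ki‖ := by rw [inv_inv, hKidef]
  rw [hsplit, map_sub, hσ]
  have hQPnonneg : 0 ≤ Qmu ^ (2:ℕ) * Pmu :=
    mul_nonneg (pow_nonneg (norm_nonneg _) _) (norm_nonneg _)
  calc ‖(opow L (1 / 2)) h - (opow L (1 / 2)) w‖
      ≤ ‖(opow L (1 / 2)) h‖ + ‖(opow L (1 / 2)) w‖ := norm_sub_le _ _
    _ ≤ (1 + μ * ‖Ki‖) * Qmu ^ (2:ℕ) * Pmu + lam * Qlam ^ (2:ℕ) * ‖g‖ :=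
        add_le_add hpartB hpartA
    _ ≤ (2 + μ * ‖Ki‖) * Qmu ^ (2:ℕ) * Pmu + lam * Qlam ^ (2:ℕ) * ‖g‖ := by
        have e : (2 + μ * ‖Ki‖) * Qmu ^ (2:ℕ) * Pmu
            = (1 + μ * ‖Ki‖) * Qmu ^ (2:ℕ) * Pmu + Qmu ^ (2:ℕ) * Pmu := by ring
        rw [e]
        linarith [hQPnonneg]
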